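/- arXiv:1707.02753 — 2 statements merged into one kernel-verified Lean document; each statement's English description precedes it below -/
import Mathlib

section
/- Let A be a feasible tree solution and F a feasible solution with V[A]=V[F], and let e,f ∈ A be two edges that are compatible w.r.t. F. Then e is safe if and only if f is safe. -/
open Finset

attribute [local instance] Classical.propDecidable

variable {V : Type*} [Fintype V] [DecidableEq V]

/-- The simple graph on `V` induced by a finite set of (undirected) edges. -/
def graphOf (F : Finset (Sym2 V)) : SimpleGraph V where
  Adj u v := u ≠ v ∧ s(u, v) ∈ F
  symm := by
    constructor
    intro u v h
    refine ⟨Ne.symm h.1, ?_⟩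
    rw [Sym2.eq_swap]
    exact h.2
  loopless := by constructor; intro v h; exact h.1 rfl

/-- The set of vertices incident to at least one edge of `F` (denoted `V[F]` in the paper). -/
def supp (F : Finset (Sym2 V)) : Set V := {v | ∃ e ∈ F, v ∈ e}

/-- A Steiner forest `F` is feasible for the terminal pairs `T` if it connects every pair. -/
def Feasible (F : Finset (Sym2 V)) (T : Finset (V × V)) : Prop :=
  ∀ p ∈ T, (graphOf F).Reachable p.1 p.2

/-- Total edge cost `d(F)`. -/
def cost (d : Sym2 V → ℝ) (F : Finset (Sym2 V)) : ℝ := ∑ e ∈ F, d e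

/-- `A` is a tree (on its vertex support): loopless edges, acyclic, connected on `V[A]`. -/
def IsTreeSol (A : Finset (Sym2 V)) : Prop :=
  (∀ e ∈ A, ¬ e.IsDiag) ∧ (graphOf A).IsAcyclic ∧
    ∀ u ∈ supp A, ∀ v ∈ supp A, (graphOf A).Reachable u v

/-- Shortest-path distance between `u` and `v` in the graph with edge set `Eall`
and edge lengths `d`. -/
noncomputable def wdist (Eall : Finset (Sym2 V)) (d : Sym2 V → ℝ) (u v : V) : ℝ :=
  ⨅ p : (graphOf Eall).Walk u v, (p.edges.map d).sum

/-- Width of a vertex set `W`: the largest shortest-path distance of a terminal pair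
whose two members both lie in `W`. -/
noncomputable def widthSet (Eall : Finset (Sym2 V)) (d : Sym2 V → ℝ) (T : Finset (V × V))
    (W : Set V) : ℝ :=
  sSup {x : ℝ | ∃ p ∈ T, p.1 ∈ W ∧ p.2 ∈ W ∧ x = wdist Eall d p.1 p.2}

/-- Total width `w(F)`: the sum of the widths of the connected components of `F`. -/
noncomputable def totalWidth (Eall : Finset (Sym2 V)) (d : Sym2 V → ℝ) (T : Finset (V × V))
    (F : Finset (Sym2 V)) : ℝ :=
  ∑ᶠ c : (graphOf F).ConnectedComponent, widthSet Eall d T c.supp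

/-- The potential `φ(F) = d(F) + w(F)`. -/
noncomputable def phi (Eall : Finset (Sym2 V)) (d : Sym2 V → ℝ) (T : Finset (V × V))
    (F : Finset (Sym2 V)) : ℝ :=
  cost d F + totalWidth Eall d T F

/-- Some edge of `F` leaves the vertex set `W`. -/
def leavesSet (F : Finset (Sym2 V)) (W : Set V) : Prop :=
  ∃ g ∈ F, ∃ x y : V, g = s(x, y) ∧ x ∈ W ∧ y ∉ W

/-- `T_{e,f}`: the connected component of `A ∖ {e,f}` containing the interior of the
unique `e`–`f` path of the tree `A`; equivalently, the component containing an endpoint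
of `e` together with an endpoint of `f`. -/
def midComp (A : Finset (Sym2 V)) (e f : Sym2 V) : Set V :=
  {v | ∃ x ∈ e, ∃ y ∈ f,
    (graphOf (A \ {e, f})).Reachable x y ∧ (graphOf (A \ {e, f})).Reachable x v}

/-- `e` and `f` are compatible w.r.t. `F` (`e ~cp f`). -/
def Compatible (A F : Finset (Sym2 V)) (e f : Sym2 V) : Prop :=
  e = f ∨ ¬ leavesSet F (midComp A e f)

/-- `e` is safe: some `F`-edge crosses between the two components of `A ∖ {e}`. -/
def Safe (A F : Finset (Sym2 V)) (e : Sym2 V) : Prop :=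
  ∃ g ∈ F, ∃ x y : V, g = s(x, y) ∧ x ≠ y ∧ ¬ (graphOf (A.erase e)).Reachable x y

/-- `e` is essential: removing it from `A` destroys feasibility. -/
def Essential (A : Finset (Sym2 V)) (T : Finset (V × V)) (e : Sym2 V) : Prop :=
  ¬ Feasible (A.erase e) T

/-- The compatibility class of the edge `e` of `A`. -/
noncomputable def cls (A F : Finset (Sym2 V)) (e : Sym2 V) : Finset (Sym2 V) :=
  A.filter (fun f => Compatible A F e f)

/-- `S_u`: the set of unsafe edges of `A`. -/
noncomputable def unsafeCls (A F : Finset (Sym2 V)) : Finset (Sym2 V) :=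
  A.filter (fun e => ¬ Safe A F e)

/-- `𝔖`: the set of compatibility classes of edges of `A`. -/
noncomputable def classes (A F : Finset (Sym2 V)) : Finset (Finset (Sym2 V)) :=
  A.image (cls A F)

/-- `e` lies on the fundamental cycle closed by adding the edge `f` to the tree `A`. -/
def onFundCycle (A : Finset (Sym2 V)) (f e : Sym2 V) : Prop :=
  e ∈ A ∧ ∀ x y : V, f = s(x, y) →
    (graphOf A).Reachable x y ∧ ¬ (graphOf (A.erase e)).Reachable x y

/-- Edge/edge swap optimality of `A` w.r.t. added edges from `Eadd` and objective `obj`: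
no swap that adds an edge `f ∈ Eadd` and removes one edge of the cycle it closes,
keeping feasibility, strictly decreases the objective. -/
def EdgeEdgeSwapOptimal (Eadd : Finset (Sym2 V)) (T : Finset (V × V))
    (obj : Finset (Sym2 V) → ℝ) (A : Finset (Sym2 V)) : Prop :=
  ∀ f ∈ Eadd, ∀ e, onFundCycle A f e →
    Feasible (A.erase e ∪ {f}) T → obj A ≤ obj (A.erase e ∪ {f})

/-- Edge/set swap optimality of `A` w.r.t. added edges from `Eadd` and objective `obj`:
no swap that adds an edge `f ∈ Eadd` and removes a set `S` of edges of the cycle it closes,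
keeping feasibility, strictly decreases the objective. -/
def EdgeSetSwapOptimal (Eadd : Finset (Sym2 V)) (T : Finset (V × V))
    (obj : Finset (Sym2 V) → ℝ) (A : Finset (Sym2 V)) : Prop :=
  ∀ f ∈ Eadd, ∀ S ⊆ A, (∀ e ∈ S, onFundCycle A f e) →
    Feasible ((A \ S) ∪ {f}) T → obj A ≤ obj ((A \ S) ∪ {f})

/-- Removing swap optimality: deleting any (feasibility preserving) edge set from `A`
does not strictly decrease the objective. -/
def RemovingSwapOptimal (T : Finset (V × V))
    (obj : Finset (Sym2 V) → ℝ) (A : Finset (Sym2 V)) : Prop :=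
  ∀ S ⊆ A, Feasible (A \ S) T → obj A ≤ obj (A \ S)

/-- Path/set swap optimality of `A`: for vertices `u, v` in the same component of `A`,
adding a set `P ⊆ Eadd` of edges (along a `u`–`v` connection) and removing a set `S` of
edges of the component of `u`, in a way that keeps `u,v` connected and the solution
feasible, does not strictly decrease the objective. -/
def PathSetSwapOptimal (Eadd : Finset (Sym2 V)) (T : Finset (V × V))
    (obj : Finset (Sym2 V) → ℝ) (A : Finset (Sym2 V)) : Prop :=
  ∀ u v : V, (graphOf A).Reachable u v →
    ∀ P : Finset (Sym2 V), P ⊆ Eadd → ∀ S ⊆ A,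
      (∀ e ∈ S, ∃ x ∈ e, (graphOf A).Reachable u x) →
      (graphOf ((A \ S) ∪ P)).Reachable u v →
      Feasible ((A \ S) ∪ P) T → obj A ≤ obj ((A \ S) ∪ P)

/-- A connected component `c` of `A ∖ S` is an *inner* component for the class `S`
if it touches (at least) two distinct edges of `S`. -/
def innerComp (A S : Finset (Sym2 V)) (c : (graphOf (A \ S)).ConnectedComponent) : Prop :=
  ∃ e ∈ S, ∃ e' ∈ S, e ≠ e' ∧ (∃ x ∈ e, (graphOf (A \ S)).connectedComponentMk x = c) ∧
    ∃ y ∈ e', (graphOf (A \ S)).connectedComponentMk y = c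

/-- The sum of the widths of the inner components `E_{S,i}`, `i ∈ In_S`, of the class `S`. -/
noncomputable def innerWidthSum (Eall : Finset (Sym2 V)) (d : Sym2 V → ℝ) (T : Finset (V × V))
    (A S : Finset (Sym2 V)) : ℝ :=
  ∑ᶠ c : (graphOf (A \ S)).ConnectedComponent,
    if innerComp A S c then widthSet Eall d T c.supp else 0

/-- `index(E')` for a vertex set `W`: the largest index `i` (in the enumeration `tp` of the
terminal pairs by nondecreasing distance) of a terminal pair lying entirely inside `W`. -/
noncomputable def idxOf {nt : ℕ} (tp : Fin nt → V × V) (W : Set V) : ℕ :=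
  sSup {i : ℕ | ∃ h : i < nt, (tp ⟨i, h⟩).1 ∈ W ∧ (tp ⟨i, h⟩).2 ∈ W}

/-- The finite vertex support of an edge set. -/
def suppF (B : Finset (Sym2 V)) : Finset V :=
  Finset.univ.filter (fun v => ∃ e ∈ B, v ∈ e)

/-- `e` crosses between two different connected components of `A`. -/
def crossingEdge (A : Finset (Sym2 V)) (e : Sym2 V) : Prop :=
  ∀ x y : V, e = s(x, y) → ¬ (graphOf A).Reachable x y

/-- The components of `A` touched by the edge set `B`, i.e. the nodes of `G_A`
incident to `B`. -/
noncomputable def touched (A B : Finset (Sym2 V)) :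
    Finset ((graphOf A).ConnectedComponent) :=
  (suppF B).image ((graphOf A).connectedComponentMk)

/-- `B` is (the edge set of) a tree in the contracted multigraph `G_A`: all its edges cross
between components of `A`, it is connected (through the components of `A` it touches), and
it has one edge less than the number of components it touches. -/
def IsGATree (A B : Finset (Sym2 V)) : Prop :=
  (∀ e ∈ B, crossingEdge A e) ∧ (touched A B).card = B.card + 1 ∧
    ∀ x ∈ suppF B, ∀ y ∈ suppF B, (graphOf (A ∪ B)).Reachable x y

/-- `A` is `c`-approximate connecting move optimal: for every tree `B` in `G_A` (with edges
taken from `Emoves`), the total width of the components it connects, minus the largest of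
these widths, is at most `c` times the length of the tree. -/
def ConnApproxOptimal (Emoves Eall : Finset (Sym2 V)) (d : Sym2 V → ℝ) (T : Finset (V × V))
    (c : ℝ) (A : Finset (Sym2 V)) : Prop :=
  ∀ B ⊆ Emoves, IsGATree A B →
    (∑ t ∈ touched A B, widthSet Eall d T t.supp)
      - (⨆ t ∈ touched A B, widthSet Eall d T t.supp) ≤ c * ∑ e ∈ B, d e


section AuxProof

private lemma graphOf_mono' {B C : Finset (Sym2 V)} (h : B ⊆ C) : graphOf B ≤ graphOf C := by
  intro u v hv; exact ⟨hv.1, h hv.2⟩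

private lemma reach_mono' {B C : Finset (Sym2 V)} (h : B ⊆ C) {x y : V}
    (r : (graphOf B).Reachable x y) : (graphOf C).Reachable x y :=
  r.mono (graphOf_mono' h)

private lemma reach_classify (B : Finset (Sym2 V)) (c d : V) {x y : V}
    (w : (graphOf B).Walk x y) :
    (graphOf (B.erase s(c,d))).Reachable x y ∨
    ((graphOf (B.erase s(c,d))).Reachable x c ∧ (graphOf (B.erase s(c,d))).Reachable d y) ∨
    ((graphOf (B.erase s(c,d))).Reachable x d ∧ (graphOf (B.erase s(c,d))).Reachable c y) := by
  induction w with
  | nil => exact Or.inl (SimpleGraph.Reachable.refl _)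
  | @cons u v z h p ih =>
    by_cases hcase : s(u, v) = s(c, d)
    · rcases Sym2.eq_iff.mp hcase with ⟨rfl, rfl⟩ | ⟨rfl, rfl⟩
      · rcases ih with r | ⟨r1, r2⟩ | ⟨r1, r2⟩
        · exact Or.inr (Or.inl ⟨SimpleGraph.Reachable.refl _, r⟩)
        · exact Or.inr (Or.inl ⟨SimpleGraph.Reachable.refl _, r2⟩)
        · exact Or.inl r2
      · rcases ih with r | ⟨r1, r2⟩ | ⟨r1, r2⟩
        · exact Or.inr (Or.inr ⟨SimpleGraph.Reachable.refl _, r⟩)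
        · exact Or.inl r2
        · exact Or.inr (Or.inr ⟨SimpleGraph.Reachable.refl _, r2⟩)
    · have hadj : (graphOf (B.erase s(c,d))).Adj u v :=
        ⟨h.1, Finset.mem_erase.mpr ⟨hcase, h.2⟩⟩
      rcases ih with r | ⟨r1, r2⟩ | ⟨r1, r2⟩
      · exact Or.inl (hadj.reachable.trans r)
      · exact Or.inr (Or.inl ⟨hadj.reachable.trans r1, r2⟩)
      · exact Or.inr (Or.inr ⟨hadj.reachable.trans r1, r2⟩)

private lemma tree_bridge' {A : Finset (Sym2 V)} (hAc : (graphOf A).IsAcyclic)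
    {a b : V} (hab : s(a,b) ∈ A) (hne : a ≠ b) :
    ¬ (graphOf (A.erase s(a,b))).Reachable a b := by
  intro hr
  have hadj : (graphOf A).Adj a b := ⟨hne, hab⟩
  have hb := (SimpleGraph.isAcyclic_iff_forall_adj_isBridge.mp hAc) hadj
  rw [SimpleGraph.isBridge_iff] at hb
  refine hb (hr.mono ?_)
  intro u v hv
  rcases Finset.mem_erase.mp hv.2 with ⟨hne', hmem⟩
  refine ⟨⟨hv.1, hmem⟩, ?_⟩
  simp [SimpleGraph.fromEdgeSet_adj, hne']

private lemma midComp_comm' (A : Finset (Sym2 V)) (e f : Sym2 V) :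
    midComp A f e = midComp A e f := by
  have hpair : ({f, e} : Finset (Sym2 V)) = {e, f} := Finset.pair_comm f e
  ext v
  simp only [midComp, Set.mem_setOf_eq, hpair]
  constructor
  · rintro ⟨x, hx, y, hy, rxy, rxv⟩
    exact ⟨y, hy, x, hx, rxy.symm, rxy.symm.trans rxv⟩
  · rintro ⟨x, hx, y, hy, rxy, rxv⟩
    exact ⟨y, hy, x, hx, rxy.symm, rxy.symm.trans rxv⟩

private lemma aux_safe {A F : Finset (Sym2 V)}
    (hAtree : IsTreeSol A) (hsupp : supp A = supp F)
    {e f : Sym2 V} (he : e ∈ A) (hf : f ∈ A) (hnef : e ≠ f)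
    (hnl : ¬ leavesSet F (midComp A e f)) :
    Safe A F e → Safe A F f := by
  classical
  obtain ⟨a, b, rfl⟩ : ∃ a b, e = s(a, b) := Sym2.ind (fun a b => ⟨a, b, rfl⟩) e
  obtain ⟨c, d, rfl⟩ : ∃ c d, f = s(c, d) := Sym2.ind (fun c d => ⟨c, d, rfl⟩) f
  have hab : a ≠ b := by
    have := hAtree.1 _ he; simpa [Sym2.mk_isDiag_iff] using this
  have hcd : c ≠ d := by
    have := hAtree.1 _ hf; simpa [Sym2.mk_isDiag_iff] using this
  have hconn := hAtree.2.2
  have hAc := hAtree.2.1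
  -- bridge for e with original labels
  have hbr_e : ¬ (graphOf (A.erase s(a,b))).Reachable a b := tree_bridge' hAc he hab
  -- supports
  have hbsupp : b ∈ supp A := ⟨s(a,b), he, Sym2.mem_mk_right a b⟩
  have hcsupp : c ∈ supp A := ⟨s(c,d), hf, Sym2.mem_mk_left c d⟩
  -- erase-erase rewriting lemmas
  have herase1 : (A.erase s(a,b)).erase s(c,d) = A \ {s(a,b), s(c,d)} := by
    ext g
    simp only [Finset.mem_erase, Finset.mem_sdiff, Finset.mem_insert, Finset.mem_singleton]
    tauto
  have herase2 : (A.erase s(c,d)).erase s(a,b) = A \ {s(a,b), s(c,d)} := by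
    ext g
    simp only [Finset.mem_erase, Finset.mem_sdiff, Finset.mem_insert, Finset.mem_singleton]
    tauto
  -- Claim M: some endpoint of e is connected to some endpoint of f in A \ {e,f}
  have key : ∃ a0 b0 c0 d0 : V, s(a,b) = s(a0,b0) ∧ a0 ≠ b0 ∧ s(c,d) = s(c0,d0) ∧ c0 ≠ d0 ∧
      (graphOf (A \ {s(a,b), s(c,d)})).Reachable a0 c0 := by
    obtain ⟨w⟩ := hconn b hbsupp c hcsupp
    have hstep : ∃ a0, (s(a,b) = s(a0, b) ∨ s(a,b) = s(a0, a)) ∧ (a0 = a ∨ a0 = b) ∧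
        (graphOf (A.erase s(a,b))).Reachable a0 c := by
      rcases reach_classify A a b w with h1 | ⟨h2a, _⟩ | ⟨_, h3b⟩
      · exact ⟨b, Or.inr Sym2.eq_swap, Or.inr rfl, h1⟩
      · exact absurd h2a.symm hbr_e
      · exact ⟨a, Or.inl rfl, Or.inl rfl, h3b⟩
    obtain ⟨a0, heq0, _, ha0c⟩ := hstep
    obtain ⟨w2⟩ := ha0c
    have hclass := reach_classify (A.erase s(a,b)) c d w2
    rw [herase1] at hclass
    have heqe : ∃ b0, s(a,b) = s(a0,b0) ∧ a0 ≠ b0 := by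
      rcases heq0 with h | h
      · refine ⟨b, h, ?_⟩
        rcases Sym2.eq_iff.mp h with ⟨h1, _⟩ | ⟨h1, _⟩
        · exact h1 ▸ hab
        · exact absurd h1 hab
      · refine ⟨a, h, ?_⟩
        rcases Sym2.eq_iff.mp h with ⟨_, h2⟩ | ⟨_, h2⟩
        · exact absurd h2.symm hab
        · exact h2 ▸ hab.symm
    obtain ⟨b0, heqb, hneb⟩ := heqe
    rcases hclass with k1 | ⟨k2a, _⟩ | ⟨k3a, _⟩
    · exact ⟨a0, b0, c, d, heqb, hneb, rfl, hcd, k1⟩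
    · exact ⟨a0, b0, c, d, heqb, hneb, rfl, hcd, k2a⟩
    · exact ⟨a0, b0, d, c, heqb, hneb, Sym2.eq_swap, hcd.symm, k3a⟩
  obtain ⟨a0, b0, c0, d0, heq, hne0, feq, fne0, hR2⟩ := key
  rw [heq] at he hnef hnl herase1 herase2 hR2 ⊢
  rw [feq] at hf hnef hnl herase1 herase2 hR2 ⊢
  intro hsafe
  -- rename: now e = s(a0,b0), f = s(c0,d0)
  have hbr_e0 : ¬ (graphOf (A.erase s(a0,b0))).Reachable a0 b0 := tree_bridge' hAc he hne0
  have hbr_f0 : ¬ (graphOf (A.erase s(c0,d0))).Reachable c0 d0 := tree_bridge' hAc hf fne0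
  have hs_e : A \ {s(a0,b0), s(c0,d0)} ⊆ A.erase s(a0,b0) := by
    intro g hg
    rcases Finset.mem_sdiff.mp hg with ⟨hgA, hgm⟩
    simp only [Finset.mem_insert, Finset.mem_singleton, not_or] at hgm
    exact Finset.mem_erase.mpr ⟨hgm.1, hgA⟩
  have hs_f : A \ {s(a0,b0), s(c0,d0)} ⊆ A.erase s(c0,d0) := by
    intro g hg
    rcases Finset.mem_sdiff.mp hg with ⟨hgA, hgm⟩
    simp only [Finset.mem_insert, Finset.mem_singleton, not_or] at hgm
    exact Finset.mem_erase.mpr ⟨hgm.2, hgA⟩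
  have hnR2ab : ¬ (graphOf (A \ {s(a0,b0), s(c0,d0)})).Reachable a0 b0 :=
    fun h => hbr_e0 (reach_mono' hs_e h)
  have hnR2cd : ¬ (graphOf (A \ {s(a0,b0), s(c0,d0)})).Reachable c0 d0 :=
    fun h => hbr_f0 (reach_mono' hs_f h)
  have hGea0c0 : (graphOf (A.erase s(a0,b0))).Reachable a0 c0 := reach_mono' hs_e hR2
  have hGecd : (graphOf (A.erase s(a0,b0))).Reachable c0 d0 :=
    (SimpleGraph.Adj.reachable ⟨fne0, Finset.mem_erase.mpr ⟨hnef.symm, hf⟩⟩)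
  have hnGeb0c0 : ¬ (graphOf (A.erase s(a0,b0))).Reachable b0 c0 :=
    fun h => hbr_e0 (hGea0c0.trans h.symm)
  have hnGeb0d0 : ¬ (graphOf (A.erase s(a0,b0))).Reachable b0 d0 :=
    fun h => hnGeb0c0 (h.trans hGecd.symm)
  -- middle component
  have hM : midComp A s(a0,b0) s(c0,d0) = {v | (graphOf (A \ {s(a0,b0), s(c0,d0)})).Reachable a0 v} := by
    ext v
    constructor
    · rintro ⟨x, hx, y, hy, rxy, rxv⟩
      rcases Sym2.mem_iff.mp hx with rfl | rfl
      · exact rxv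
      · rcases Sym2.mem_iff.mp hy with rfl | rfl
        · exact absurd (hR2.trans rxy.symm) hnR2ab
        · exact absurd (reach_mono' hs_e rxy) hnGeb0d0
    · intro hv
      exact ⟨a0, Sym2.mem_mk_left a0 b0, c0, Sym2.mem_mk_left c0 d0, hR2, hv⟩
  obtain ⟨g, hgF, x, y, hgxy, hxyne, hnreach⟩ := hsafe
  have hxsupp : x ∈ supp A := hsupp ▸ ⟨g, hgF, by rw [hgxy]; exact Sym2.mem_mk_left x y⟩
  have hysupp : y ∈ supp A := hsupp ▸ ⟨g, hgF, by rw [hgxy]; exact Sym2.mem_mk_right x y⟩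
  -- the main argument, for a correctly oriented crossing edge
  have final : ∀ x y : V, g = s(x,y) → x ≠ y →
      ¬ (graphOf (A.erase s(a0,b0))).Reachable x y →
      (graphOf (A.erase s(a0,b0))).Reachable x a0 →
      (graphOf (A.erase s(a0,b0))).Reachable y b0 → Safe A F s(c0,d0) := by
    intro x y hg hxy hnxy hxa hyb
    obtain ⟨w1⟩ := hyb
    have hc1 := reach_classify (A.erase s(a0,b0)) c0 d0 w1
    rw [herase1] at hc1
    have hyB2 : (graphOf (A \ {s(a0,b0), s(c0,d0)})).Reachable y b0 := by
      rcases hc1 with m1 | ⟨_, m2b⟩ | ⟨_, m3b⟩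
      · exact m1
      · exact absurd (reach_mono' hs_e m2b.symm) hnGeb0d0
      · exact absurd (hR2.trans m3b) hnR2ab
    have hynM : y ∉ midComp A s(a0,b0) s(c0,d0) := by
      rw [hM]
      intro hv
      exact hnR2ab (hv.trans hyB2)
    obtain ⟨w2⟩ := hxa
    have hc2 := reach_classify (A.erase s(a0,b0)) c0 d0 w2
    rw [herase1] at hc2
    have hxD : (graphOf (A \ {s(a0,b0), s(c0,d0)})).Reachable x d0 := by
      rcases hc2 with n1 | ⟨_, n2b⟩ | ⟨n3a, _⟩
      · exfalso
        refine hnl ⟨g, hgF, x, y, hg, ?_, hynM⟩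
        rw [hM]; exact n1.symm
      · exact absurd (reach_mono' hs_f (n2b.trans hR2)).symm hbr_f0
      · exact n3a
    refine ⟨g, hgF, x, y, hg, hxy, ?_⟩
    intro hr
    obtain ⟨w3⟩ := hr
    have hc3 := reach_classify (A.erase s(c0,d0)) a0 b0 w3
    rw [herase2] at hc3
    rcases hc3 with p1 | ⟨p2a, _⟩ | ⟨p3a, _⟩
    · exact hnxy (reach_mono' hs_e p1)
    · exact hnR2cd ((hR2.symm.trans (p2a.symm.trans hxD)))
    · exact hnGeb0d0 (reach_mono' hs_e (p3a.symm.trans hxD))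
  obtain ⟨w⟩ := hconn x hxsupp y hysupp
  rcases reach_classify A a0 b0 w with h1 | ⟨h2a, h2b⟩ | ⟨h3a, h3b⟩
  · exact absurd h1 hnreach
  · exact final x y hgxy hxyne hnreach h2a h2b.symm
  · exact final y x (hgxy.trans Sym2.eq_swap) hxyne.symm (fun h => hnreach h.symm) h3b.symm h3a

end AuxProof

theorem stmt4_safe_all_or_none
    (T : Finset (V × V)) (A F : Finset (Sym2 V))
    (hAfeas : Feasible A T) (hFfeas : Feasible F T)
    (hAtree : IsTreeSol A) (hsupp : supp A = supp F)
    (e f : Sym2 V) (he : e ∈ A) (hf : f ∈ A)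
    (hef : Compatible A F e f) :
    Safe A F e ↔ Safe A F f := by
  rcases hef with rfl | hnl
  · rfl
  by_cases hnef : e = f
  · subst hnef; rfl
  constructor
  · exact aux_safe hAtree hsupp he hf hnef hnl
  · exact aux_safe hAtree hsupp hf he (Ne.symm hnef)
      (by rw [midComp_comm']; exact hnl)
end

section
/- Let A be a feasible tree solution and F a feasible solution with V[A]=V[F]. Let S be an equivalence class of ~cp, let e ∈ S, and let f ∈ F be such that A∖{e}∪{f} is feasible. Then A∖S'∪{f} is feasible for every subset S' ⊆ S. -/
open Finset

attribute [local instance] Classical.propDecidable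

variable {V : Type*} [Fintype V] [DecidableEq V]

-- AUX

lemma edges_mem_graphOf {E : Finset (Sym2 V)} {u v : V} (w : (graphOf E).Walk u v) :
    ∀ e ∈ w.edges, e ∈ E := by
  intro e he
  have h := w.edges_subset_edgeSet he
  revert h
  induction e using Sym2.ind with
  | _ x y => intro h; exact h.2

lemma graphOf_le {E E' : Finset (Sym2 V)} (h : E ⊆ E') : graphOf E ≤ graphOf E' := by
  intro x y ha; exact ⟨ha.1, h ha.2⟩

lemma walk_edges_in_edgeSet {E E' : Finset (Sym2 V)} (hsub : E ⊆ E') {u v : V}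
    (w : (graphOf E).Walk u v) : ∀ e ∈ w.edges, e ∈ (graphOf E').edgeSet :=
  fun _ he => SimpleGraph.edgeSet_mono (graphOf_le hsub) (w.edges_subset_edgeSet he)

lemma reach_transfer {E E' : Finset (Sym2 V)} {u v : V} (w : (graphOf E).Walk u v)
    (h : ∀ e ∈ w.edges, e ∈ E') : (graphOf E').Reachable u v := by
  induction w with
  | nil => exact SimpleGraph.Reachable.refl _
  | @cons a x b hadj w ih =>
      have h1 : s(a, x) ∈ E' := h _ (by simp [SimpleGraph.Walk.edges_cons])
      have hadj' : (graphOf E').Adj a x := ⟨hadj.1, h1⟩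
      have hrest : (graphOf E').Reachable x b :=
        ih (fun e he => h e (by simp [SimpleGraph.Walk.edges_cons, he]))
      exact hadj'.reachable.trans hrest

lemma reach_mono {E E' : Finset (Sym2 V)} (h : E ⊆ E') {u v : V}
    (hr : (graphOf E).Reachable u v) : (graphOf E').Reachable u v := by
  obtain ⟨w⟩ := hr
  exact reach_transfer w fun e he => h (edges_mem_graphOf w e he)

lemma reach_split {E : Finset (Sym2 V)} {u v : V} (w : (graphOf E).Walk u v) (c d : V) :
    (graphOf (E.erase s(c, d))).Reachable u v ∨
      ((graphOf (E.erase s(c, d))).Reachable u c ∧ (graphOf (E.erase s(c, d))).Reachable d v) ∨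
      ((graphOf (E.erase s(c, d))).Reachable u d ∧ (graphOf (E.erase s(c, d))).Reachable c v) := by
  induction w with
  | nil => exact Or.inl (SimpleGraph.Reachable.refl _)
  | @cons a x b hadj w ih =>
      by_cases hef : s(a, x) = s(c, d)
      · rcases Sym2.eq_iff.mp hef with ⟨rfl, rfl⟩ | ⟨rfl, rfl⟩
        · rcases ih with h | ⟨h1, h2⟩ | ⟨h1, h2⟩
          · exact Or.inr (Or.inl ⟨SimpleGraph.Reachable.refl _, h⟩)
          · exact Or.inr (Or.inl ⟨SimpleGraph.Reachable.refl _, h2⟩)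
          · exact Or.inl h2
        · rcases ih with h | ⟨h1, h2⟩ | ⟨h1, h2⟩
          · exact Or.inr (Or.inr ⟨SimpleGraph.Reachable.refl _, h⟩)
          · exact Or.inl h2
          · exact Or.inr (Or.inr ⟨SimpleGraph.Reachable.refl _, h2⟩)
      · have hadj' : (graphOf (E.erase s(c, d))).Adj a x :=
          ⟨hadj.1, Finset.mem_erase.mpr ⟨hef, hadj.2⟩⟩
        rcases ih with h | ⟨h1, h2⟩ | ⟨h1, h2⟩
        · exact Or.inl (hadj'.reachable.trans h)
        · exact Or.inr (Or.inl ⟨hadj'.reachable.trans h1, h2⟩)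
        · exact Or.inr (Or.inr ⟨hadj'.reachable.trans h1, h2⟩)

lemma not_reach_erase {A : Finset (Sym2 V)} (hac : (graphOf A).IsAcyclic)
    {a b : V} (hne : a ≠ b) (he : s(a, b) ∈ A) :
    ¬ (graphOf (A.erase s(a, b))).Reachable a b := by
  intro hr
  obtain ⟨w⟩ := hr
  set p := (w.bypass.transfer (graphOf A)
    (walk_edges_in_edgeSet (Finset.erase_subset _ _) w.bypass)) with hpdef
  have hpath : p.IsPath := by
    rw [SimpleGraph.Walk.isPath_def, hpdef, SimpleGraph.Walk.support_transfer]
    exact (SimpleGraph.Walk.isPath_def _).mp (SimpleGraph.Walk.bypass_isPath w)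
  have hadj : (graphOf A).Adj b a := ⟨hne.symm, by rw [Sym2.eq_swap]; exact he⟩
  have hcyc : (SimpleGraph.Walk.cons hadj p).IsCycle := by
    rw [SimpleGraph.Walk.cons_isCycle_iff]
    refine ⟨hpath, ?_⟩
    rw [hpdef, SimpleGraph.Walk.edges_transfer]
    intro hmem
    have hthis : s(b, a) ∈ A.erase s(a, b) :=
      edges_mem_graphOf w _ (w.edges_bypass_subset hmem)
    exact (Finset.mem_erase.mp hthis).1 Sym2.eq_swap
  exact hac _ hcyc

lemma not_reach_of_edge_mem_path {A E : Finset (Sym2 V)} (hac : (graphOf A).IsAcyclic)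
    (hEA : E ⊆ A) {u v : V} (p : (graphOf E).Walk u v) (hp : p.IsPath)
    {g : Sym2 V} (hg : g ∈ p.edges) :
    ¬ (graphOf (A.erase g)).Reachable u v := by
  intro hr
  obtain ⟨w'⟩ := hr
  set q := (w'.transfer (graphOf A)
    (walk_edges_in_edgeSet (Finset.erase_subset _ _) w')).bypass with hqdef
  have hq : q.IsPath := SimpleGraph.Walk.bypass_isPath _
  set p' := p.transfer (graphOf A) (walk_edges_in_edgeSet hEA p) with hp'def
  have hp' : p'.IsPath := by
    rw [SimpleGraph.Walk.isPath_def, hp'def, SimpleGraph.Walk.support_transfer]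
    exact (SimpleGraph.Walk.isPath_def _).mp hp
  have huniq := SimpleGraph.isAcyclic_iff_path_unique.mp hac ⟨p', hp'⟩ ⟨q, hq⟩
  have heq : p' = q := congrArg Subtype.val huniq
  have hg' : g ∈ q.edges := by
    rw [← heq, hp'def, SimpleGraph.Walk.edges_transfer]
    exact hg
  have hgwA : g ∈ A.erase g := by
    have h1 := SimpleGraph.Walk.edges_bypass_subset _ hg'
    rw [SimpleGraph.Walk.edges_transfer] at h1
    exact edges_mem_graphOf w' g h1
  exact Finset.notMem_erase g A hgwA

lemma no_leave_iff {F : Finset (Sym2 V)} {W : Set V} (h : ¬ leavesSet F W)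
    {u v : V} (hr : (graphOf F).Reachable u v) : (u ∈ W ↔ v ∈ W) := by
  have h' : ∀ g ∈ F, ∀ x y : V, g = s(x, y) → x ∈ W → y ∈ W := by
    intro g hg x y hxy hx
    by_contra hy
    exact h ⟨g, hg, x, y, hxy, hx, hy⟩
  obtain ⟨w⟩ := hr
  induction w with
  | nil => rfl
  | @cons a x b hadj w ih =>
      exact (Iff.intro (h' s(a, x) hadj.2 a x rfl) (h' s(a, x) hadj.2 x a Sym2.eq_swap)).trans ih

lemma midComp_conn {A : Finset (Sym2 V)} (hac : (graphOf A).IsAcyclic)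
    {e₀ g : Sym2 V} (he₀ : e₀ ∈ A) (hgA : g ∈ A) (hge : g ≠ e₀)
    {a b c d : V} (he₀ab : e₀ = s(a, b)) (hab : a ≠ b) (hgcd : g = s(c, d)) (hcd : c ≠ d)
    {w w' : V} (hw : w ∈ midComp A e₀ g) (hw' : w' ∈ midComp A e₀ g) :
    (graphOf (A \ {e₀, g})).Reachable w w' := by
  subst he₀ab; subst hgcd
  obtain ⟨x, hx, y, hy, hxy, hxw⟩ := hw
  obtain ⟨x', hx', y', hy', hxy', hxw'⟩ := hw'
  have hBsub : A \ {s(a, b), s(c, d)} ⊆ A.erase s(a, b) := by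
    intro z hz
    rw [Finset.mem_sdiff] at hz
    rw [Finset.mem_erase]
    exact ⟨fun hez => hz.2 (by simp [hez]), hz.1⟩
  have hTFe : ¬ (graphOf (A.erase s(a, b))).Reachable a b := not_reach_erase hac hab he₀
  have hgmem : s(c, d) ∈ A.erase s(a, b) := Finset.mem_erase.mpr ⟨hge, hgA⟩
  have hreach_cd : (graphOf (A.erase s(a, b))).Reachable c d :=
    SimpleGraph.Adj.reachable ⟨hcd, hgmem⟩
  have hyy' : (graphOf (A.erase s(a, b))).Reachable y y' := by
    rw [Sym2.mem_iff] at hy hy'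
    rcases hy with rfl | rfl <;> rcases hy' with rfl | rfl
    exacts [SimpleGraph.Reachable.refl _, hreach_cd, hreach_cd.symm, SimpleGraph.Reachable.refl _]
  have hxx' : x = x' := by
    by_contra hne
    have key : (graphOf (A.erase s(a, b))).Reachable x x' :=
      ((reach_mono hBsub hxy).trans hyy').trans (reach_mono hBsub hxy').symm
    rw [Sym2.mem_iff] at hx hx'
    rcases hx with rfl | rfl <;> rcases hx' with rfl | rfl
    · exact hne rfl
    · exact hTFe key
    · exact hTFe key.symm
    · exact hne rfl
  subst hxx'
  exact hxw.symm.trans hxw'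

lemma lemK {A : Finset (Sym2 V)} (hAtree : IsTreeSol A)
    {e₀ : Sym2 V} (he₀ : e₀ ∈ A) {S' : Finset (Sym2 V)}
    {u v : V}
    (hM : ∀ g ∈ S', g ≠ e₀ → (u ∈ midComp A e₀ g ↔ v ∈ midComp A e₀ g))
    (hr : (graphOf (A.erase e₀)).Reachable u v) :
    (graphOf (A \ insert e₀ S')).Reachable u v := by
  obtain ⟨hnd, hac, hconn⟩ := hAtree
  obtain ⟨w0⟩ := hr
  have hp : w0.bypass.IsPath := SimpleGraph.Walk.bypass_isPath w0
  refine reach_transfer w0.bypass ?_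
  intro g hgp
  have hgE : g ∈ A.erase e₀ := edges_mem_graphOf w0.bypass g hgp
  rw [Finset.mem_erase] at hgE
  rw [Finset.mem_sdiff, Finset.mem_insert]
  refine ⟨hgE.2, ?_⟩
  rintro (h | hgS')
  · exact hgE.1 h
  have hge : g ≠ e₀ := hgE.1
  have hgA : g ∈ A := hgE.2
  obtain ⟨a, b, he₀ab⟩ : ∃ a b, e₀ = s(a, b) := ⟨e₀.out.1, e₀.out.2, by exact (Quot.out_eq _).symm⟩
  have hab : a ≠ b := fun h =>
    hnd e₀ he₀ (by rw [he₀ab, h]; exact Sym2.mk_isDiag_iff.mpr rfl)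
  obtain ⟨c, d, hgcd⟩ : ∃ c d, g = s(c, d) := ⟨g.out.1, g.out.2, by exact (Quot.out_eq _).symm⟩
  have hcd : c ≠ d := fun h =>
    hnd g hgA (by rw [hgcd, h]; exact Sym2.mk_isDiag_iff.mpr rfl)
  subst he₀ab; subst hgcd
  have hTFg : ¬ (graphOf (A.erase s(c, d))).Reachable c d := not_reach_erase hac hcd hgA
  have hnoguv : ¬ (graphOf (A.erase s(c, d))).Reachable u v :=
    not_reach_of_edge_mem_path hac (Finset.erase_subset _ _) w0.bypass hp hgp
  have hBeq : (A.erase s(a, b)).erase s(c, d) = A \ {s(a, b), s(c, d)} := by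
    ext z
    simp only [Finset.mem_erase, Finset.mem_sdiff, Finset.mem_insert, Finset.mem_singleton]
    tauto
  have hBsub : A \ {s(a, b), s(c, d)} ⊆ A.erase s(c, d) := by
    intro z hz
    rw [Finset.mem_sdiff] at hz
    rw [Finset.mem_erase]
    exact ⟨fun hez => hz.2 (by simp [hez]), hz.1⟩
  -- a witness pair connecting the two removed edges
  have hTFe : ¬ (graphOf (A.erase s(a, b))).Reachable a b := not_reach_erase hac hab he₀
  have ha_supp : a ∈ supp A := ⟨s(a, b), he₀, by simp⟩
  have hc_supp : c ∈ supp A := ⟨s(c, d), hgA, by simp⟩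
  obtain ⟨w1⟩ := hconn a ha_supp c hc_supp
  have hstep1 : ∃ x, x ∈ s(a, b) ∧ (graphOf (A.erase s(a, b))).Reachable x c := by
    rcases reach_split w1 a b with h | ⟨h1', h2'⟩ | ⟨h1', h2'⟩
    · exact ⟨a, by simp, h⟩
    · exact ⟨b, by simp, h2'⟩
    · exact absurd h1' hTFe
  obtain ⟨x₀, hx₀, hx₀c⟩ := hstep1
  obtain ⟨w2⟩ := hx₀c
  have hstep2 : ∃ y, y ∈ s(c, d) ∧ (graphOf (A \ {s(a, b), s(c, d)})).Reachable x₀ y := by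
    rcases reach_split w2 c d with h | ⟨h1', h2'⟩ | ⟨h1', h2'⟩
    · exact ⟨c, by simp, by rwa [hBeq] at h⟩
    · exact ⟨c, by simp, by rwa [hBeq] at h1'⟩
    · exact ⟨d, by simp, by rwa [hBeq] at h1'⟩
  obtain ⟨y₀, hy₀, hx₀y₀⟩ := hstep2
  have hMmem : ∀ z, (graphOf (A \ {s(a, b), s(c, d)})).Reachable x₀ z →
      z ∈ midComp A s(a, b) s(c, d) := fun z hz => ⟨x₀, hx₀, y₀, hy₀, hx₀y₀, hz⟩
  have hMclose : ∀ m z, m ∈ midComp A s(a, b) s(c, d) →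
      (graphOf (A \ {s(a, b), s(c, d)})).Reachable m z → z ∈ midComp A s(a, b) s(c, d) := by
    rintro m z ⟨x, hx, y, hy, hxy, hxm⟩ hmz
    exact ⟨x, hx, y, hy, hxy, hxm.trans hmz⟩
  have hcd_mem : c ∈ midComp A s(a, b) s(c, d) ∨ d ∈ midComp A s(a, b) s(c, d) := by
    rw [Sym2.mem_iff] at hy₀
    rcases hy₀ with rfl | rfl
    · exact Or.inl (hMmem _ hx₀y₀)
    · exact Or.inr (hMmem _ hx₀y₀)
  rcases reach_split w0.bypass c d with hcase | ⟨h1, h2⟩ | ⟨h1, h2⟩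
  · rw [hBeq] at hcase
    exact hnoguv (reach_mono hBsub hcase)
  · rw [hBeq] at h1 h2
    have huvM : u ∈ midComp A s(a, b) s(c, d) ∧ v ∈ midComp A s(a, b) s(c, d) := by
      rcases hcd_mem with hc | hd
      · have hu := hMclose c u hc h1.symm
        exact ⟨hu, (hM _ hgS' hge).mp hu⟩
      · have hv := hMclose d v hd h2
        exact ⟨(hM _ hgS' hge).mpr hv, hv⟩
    have huv := midComp_conn hac he₀ hgA hge rfl hab rfl hcd huvM.1 huvM.2
    exact hTFg (reach_mono hBsub ((h1.symm.trans huv).trans h2.symm))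
  · rw [hBeq] at h1 h2
    have huvM : u ∈ midComp A s(a, b) s(c, d) ∧ v ∈ midComp A s(a, b) s(c, d) := by
      rcases hcd_mem with hc | hd
      · have hv := hMclose c v hc h2
        exact ⟨(hM _ hgS' hge).mpr hv, hv⟩
      · have hu := hMclose d u hd h1.symm
        exact ⟨hu, (hM _ hgS' hge).mp hu⟩
    have huv := midComp_conn hac he₀ hgA hge rfl hab rfl hcd huvM.1 huvM.2
    exact hTFg (reach_mono hBsub ((h2.trans huv.symm).trans h1))

theorem stmt7_class_all_or_nothing
    (T : Finset (V × V)) (A F : Finset (Sym2 V))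
    (hAfeas : Feasible A T) (hFfeas : Feasible F T)
    (hAtree : IsTreeSol A) (hsupp : supp A = supp F)
    (e₀ : Sym2 V) (he₀ : e₀ ∈ A)
    (S : Finset (Sym2 V)) (hS : S = cls A F e₀)
    (f : Sym2 V) (hf : f ∈ F)
    (hfeas : Feasible (A.erase e₀ ∪ {f}) T) :
    ∀ S' ⊆ S, Feasible ((A \ S') ∪ {f}) T := by
  intro S' hS'sub pr hpr
  obtain ⟨s, t⟩ := pr
  by_cases hst : s = t
  · subst hst; exact SimpleGraph.Reachable.refl _
  have hSA : S' ⊆ A := by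
    intro g hg
    have h := hS'sub hg; rw [hS, cls] at h
    exact (Finset.mem_filter.mp h).1
  have hcompat : ∀ g ∈ S', g ≠ e₀ → ¬ leavesSet F (midComp A e₀ g) := by
    intro g hg hge
    have h := hS'sub hg; rw [hS, cls] at h
    rcases (Finset.mem_filter.mp h).2 with h' | h'
    · exact absurd h'.symm hge
    · exact h'
  obtain ⟨a, b, he₀ab⟩ : ∃ a b, e₀ = s(a, b) := ⟨e₀.out.1, e₀.out.2, by exact (Quot.out_eq _).symm⟩
  have hab : a ≠ b := fun h =>
    hAtree.1 e₀ he₀ (by rw [he₀ab, h]; exact Sym2.mk_isDiag_iff.mpr rfl)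
  have hMR : ∀ g ∈ S', g ≠ e₀ → ∀ z z', z ∈ midComp A e₀ g → z' ∈ midComp A e₀ g →
      (graphOf (A.erase e₀)).Reachable z z' := by
    intro g hg hge z z' hz hz'
    obtain ⟨c, d, hgcd⟩ : ∃ c d, g = s(c, d) := ⟨g.out.1, g.out.2, by exact (Quot.out_eq _).symm⟩
    have hgA := hSA hg
    have hcd : c ≠ d := fun h =>
      hAtree.1 g hgA (by rw [hgcd, h]; exact Sym2.mk_isDiag_iff.mpr rfl)
    have h := midComp_conn hAtree.2.1 he₀ hgA hge he₀ab hab hgcd hcd hz hz'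
    refine reach_mono ?_ h
    intro e he
    rw [Finset.mem_sdiff] at he
    rw [Finset.mem_erase]
    exact ⟨fun hx => he.2 (by simp [hx]), he.1⟩
  have hMst : ∀ g ∈ S', g ≠ e₀ → (s ∈ midComp A e₀ g ↔ t ∈ midComp A e₀ g) := by
    intro g hg hge
    exact no_leave_iff (hcompat g hg hge) (hFfeas (s, t) hpr)
  have hfinsub : A \ insert e₀ S' ⊆ (A \ S') ∪ {f} := by
    intro z hz
    rw [Finset.mem_sdiff, Finset.mem_insert] at hz
    exact Finset.mem_union_left _ (Finset.mem_sdiff.mpr ⟨hz.1, fun h => hz.2 (Or.inr h)⟩)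
  by_cases hAst : (graphOf (A.erase e₀)).Reachable s t
  · exact reach_mono hfinsub (lemK hAtree he₀ hMst hAst)
  obtain ⟨w⟩ := hfeas (s, t) hpr
  obtain ⟨p', q', hfpq⟩ : ∃ p q, f = s(p, q) := ⟨f.out.1, f.out.2, by exact (Quot.out_eq _).symm⟩
  have hsubE : (A.erase e₀ ∪ {f}).erase f ⊆ A.erase e₀ := by
    intro z hz
    rw [Finset.mem_erase, Finset.mem_union, Finset.mem_singleton] at hz
    rcases hz.2 with h | h
    · exact h
    · exact absurd h hz.1
  have key : ∀ p q : V, f = s(p, q) →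
      (graphOf (A.erase e₀)).Reachable s p → (graphOf (A.erase e₀)).Reachable q t →
      (graphOf ((A \ S') ∪ {f})).Reachable s t := by
    intro p q hfe hsp hqt
    have hMf : ∀ g ∈ S', g ≠ e₀ → (p ∈ midComp A e₀ g ↔ q ∈ midComp A e₀ g) := by
      intro g hg hge
      by_cases hpq : p = q
      · rw [hpq]
      · exact no_leave_iff (hcompat g hg hge)
          (SimpleGraph.Adj.reachable ⟨hpq, by rw [← hfe]; exact hf⟩)
    have hsnot : ∀ g ∈ S', g ≠ e₀ →
        (s ∉ midComp A e₀ g ∧ p ∉ midComp A e₀ g ∧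
          q ∉ midComp A e₀ g ∧ t ∉ midComp A e₀ g) := by
      intro g hg hge
      have hiff1 := hMst g hg hge
      have hiff2 := hMf g hg hge
      refine ⟨?_, ?_, ?_, ?_⟩
      · intro hs
        exact hAst (hMR g hg hge s t hs (hiff1.mp hs))
      · intro hp
        exact hAst ((hsp.trans (hMR g hg hge p q hp (hiff2.mp hp))).trans hqt)
      · intro hq
        exact hAst ((hsp.trans (hMR g hg hge p q (hiff2.mpr hq) hq)).trans hqt)
      · intro ht
        exact hAst (hMR g hg hge s t (hiff1.mpr ht) ht)
    have h1 := lemK hAtree he₀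
      (fun g hg hge => iff_of_false ((hsnot g hg hge).1) ((hsnot g hg hge).2.1)) hsp
    have h2 := lemK hAtree he₀
      (fun g hg hge => iff_of_false ((hsnot g hg hge).2.2.1) ((hsnot g hg hge).2.2.2)) hqt
    have hpqr : (graphOf ((A \ S') ∪ {f})).Reachable p q := by
      by_cases hpq' : p = q
      · rw [hpq']
      · refine SimpleGraph.Adj.reachable ⟨hpq', Finset.mem_union_right _ ?_⟩
        rw [← hfe]
        exact Finset.mem_singleton_self f
    exact ((reach_mono hfinsub h1).trans hpqr).trans (reach_mono hfinsub h2)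
  rcases reach_split w p' q' with hcase | ⟨h1, h2⟩ | ⟨h1, h2⟩
  · rw [← hfpq] at hcase
    exact absurd (reach_mono hsubE hcase) hAst
  · rw [← hfpq] at h1 h2
    exact key p' q' hfpq (reach_mono hsubE h1) (reach_mono hsubE h2)
  · rw [← hfpq] at h1 h2
    exact key q' p' (hfpq.trans Sym2.eq_swap) (reach_mono hsubE h1) (reach_mono hsubE h2)
end
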